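/- (Macaulay's Hilbert series theorem for ideals of the principal class) Let k be a field, n ≥ 1, and let P₁, ..., P_r ∈ k[X₁,...,X_n] be homogeneous polynomials of degrees l₁, ..., l_r ≥ 1 forming a regular sequence. Let I = (P₁,...,P_r). Then for every q ≥ 0, the k-dimension of the image of the space of homogeneous polynomials of degree q under the quotient map k[X₁,...,X_n] → k[X₁,...,X_n]/I equals the coefficient of x^q in the formal power series (1 − x^{l₁})···(1 − x^{l_r}) · (∑_{j≥0} x^j)^n. -/

import Mathlib

open MvPolynomial Submodule Module

attribute [local instance] MvPolynomial.gradedAlgebra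

namespace MacaulayAux

variable {k : Type*} [Field k] {n : ℕ}

local notation "A" => MvPolynomial (Fin n) k
local notation "H" => MvPolynomial.homogeneousSubmodule (Fin n) k

/-- image of the degree-`q` component in the quotient -/
noncomputable def hsImage (I : Ideal (MvPolynomial (Fin n) k)) (q : ℕ) :
    Submodule k (MvPolynomial (Fin n) k ⧸ I) :=
  Submodule.map (Ideal.Quotient.mkₐ k I).toLinearMap (H q)

-- finite dimensionality of the homogeneous components
lemma setEq (q : ℕ) :
    { d : Fin n →₀ ℕ | d.degree = q } =
      ↑(Finset.finsuppAntidiag (Finset.univ : Finset (Fin n)) q) := by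
  ext d
  simp [Finset.mem_finsuppAntidiag, Finsupp.degree_apply,
    Finset.sum_subset (Finset.subset_univ d.support)
      (fun x _ hx => Finsupp.notMem_support_iff.mp hx)]

noncomputable def hEquiv (q : ℕ) :
    H q ≃ₗ[k] ({ d : Fin n →₀ ℕ | d.degree = q } →₀ k) :=
  (LinearEquiv.ofEq _ _ (homogeneousSubmodule_eq_finsupp_supported (Fin n) k q)).trans
    (AddMonoidAlgebra.supportedEquivFinsupp _)

instance (q : ℕ) : FiniteDimensional k (H q) := by
  haveI : Finite ({ d : Fin n →₀ ℕ | d.degree = q }) := by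
    rw [setEq]; exact Finset.finite_toSet _
  exact Module.Finite.equiv (hEquiv q).symm

lemma finrank_H (q : ℕ) :
    finrank k (H q) =
      (Finset.finsuppAntidiag (Finset.univ : Finset (Fin n)) q).card := by
  haveI : Fintype ({ d : Fin n →₀ ℕ | d.degree = q }) := by
    rw [setEq]; exact FinsetCoe.fintype _
  rw [(hEquiv (k := k) q).finrank_eq, finrank_finsupp_self]
  rw [← Nat.card_eq_fintype_card, Nat.card_coe_set_eq, setEq, Set.ncard_coe_finset]

instance (I : Ideal (MvPolynomial (Fin n) k)) (q : ℕ) :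
    FiniteDimensional k (hsImage I q) :=
  Module.Finite.map _ _

section
variable {k : Type*} [Field k] {n : ℕ}

lemma decompose_apply (a : MvPolynomial (Fin n) k) (i : ℕ) :
    (DirectSum.decompose (MvPolynomial.homogeneousSubmodule (Fin n) k) a i :
      MvPolynomial (Fin n) k) = MvPolynomial.homogeneousComponent i a :=
  MvPolynomial.decomposition.decompose'_apply a i

lemma hc_mul {p : MvPolynomial (Fin n) k} {l : ℕ} (hp : p.IsHomogeneous l)
    (g : MvPolynomial (Fin n) k) (q : ℕ) :
    MvPolynomial.homogeneousComponent q (p * g) =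
      if l ≤ q then p * MvPolynomial.homogeneousComponent (q - l) g else 0 := by
  conv_lhs => rw [← MvPolynomial.sum_homogeneousComponent g]
  rw [Finset.mul_sum, map_sum]
  have h1 : ∀ j, MvPolynomial.homogeneousComponent q
      (p * MvPolynomial.homogeneousComponent j g) =
      if j = q - l ∧ l ≤ q then p * MvPolynomial.homogeneousComponent j g else 0 := by
    intro j
    have hmem : p * MvPolynomial.homogeneousComponent j g ∈
        MvPolynomial.homogeneousSubmodule (Fin n) k (l + j) :=
      hp.mul (MvPolynomial.homogeneousComponent_isHomogeneous j g)
    rw [MvPolynomial.homogeneousComponent_of_mem hmem]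
    congr 1
    simp only [eq_iff_iff]
    omega
  simp_rw [h1]
  by_cases hlq : l ≤ q
  · simp only [hlq, and_true, if_pos]
    rw [Finset.sum_ite_eq' (Finset.range (g.totalDegree + 1))]
    split_ifs with h
    · rfl
    · rw [MvPolynomial.homogeneousComponent_eq_zero _ g (by
        simp only [Finset.mem_range, not_lt] at h; omega), mul_zero]
  · simp [hlq]
end

section
variable {k : Type*} [Field k] {n : ℕ}

set_option maxHeartbeats 1000000 in
lemma step (I : Ideal (MvPolynomial (Fin n) k))
    (hI : I.IsHomogeneous (MvPolynomial.homogeneousSubmodule (Fin n) k))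
    {p : MvPolynomial (Fin n) k} {l : ℕ} (hp : p.IsHomogeneous l)
    (hreg : IsSMulRegular (MvPolynomial (Fin n) k ⧸ I) p) (q : ℕ) :
    finrank k (hsImage (I ⊔ Ideal.span {p}) q)
      + (if l ≤ q then finrank k (hsImage I (q - l)) else 0)
      = finrank k (hsImage I q) := by
  set I' : Ideal (MvPolynomial (Fin n) k) := I ⊔ Ideal.span {p} with hI'
  have hII' : I ≤ I' := le_sup_left
  -- the factor map
  set F : (MvPolynomial (Fin n) k ⧸ I) →ₐ[k] (MvPolynomial (Fin n) k ⧸ I') :=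
    Ideal.Quotient.liftₐ I (Ideal.Quotient.mkₐ k I')
      (fun a ha => by
        rw [Ideal.Quotient.mkₐ_eq_mk, Ideal.Quotient.eq_zero_iff_mem]
        exact hII' ha) with hF
  have hFmk : ∀ a : MvPolynomial (Fin n) k,
      F (Ideal.Quotient.mk I a) = Ideal.Quotient.mk I' a := fun a => rfl
  -- multiplication by p on the quotient
  set mulp : (MvPolynomial (Fin n) k ⧸ I) →ₗ[k] (MvPolynomial (Fin n) k ⧸ I) :=
    LinearMap.mulLeft k (Ideal.Quotient.mk I p) with hmulp
  have hmulp_apply : ∀ a : MvPolynomial (Fin n) k,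
      mulp (Ideal.Quotient.mk I a) = Ideal.Quotient.mk I (p * a) := fun a => by
    rw [hmulp, LinearMap.mulLeft_apply, ← map_mul]
  have hs : ∀ z : MvPolynomial (Fin n) k ⧸ I, p • z = mulp z := by
    intro z
    obtain ⟨a, rfl⟩ := Ideal.Quotient.mk_surjective z
    rw [hmulp_apply]
    rfl
  have hmulp_inj : Function.Injective mulp := by
    intro x y hxy
    apply hreg
    change p • x = p • y
    rw [hs, hs, hxy]
  -- image identification
  have hcomp0 : F.toLinearMap.comp (Ideal.Quotient.mkₐ k I).toLinearMap
      = (Ideal.Quotient.mkₐ k I').toLinearMap := LinearMap.ext fun a => rfl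
  have key1 : hsImage I' q = Submodule.map F.toLinearMap (hsImage I q) := by
    rw [hsImage, hsImage, ← hcomp0, Submodule.map_comp]
  -- kernel identification
  have key2 : hsImage I q ⊓ LinearMap.ker F.toLinearMap
      = (if l ≤ q then Submodule.map mulp (hsImage I (q - l)) else ⊥) := by
    apply le_antisymm
    · rintro x ⟨hx1, hx2⟩
      obtain ⟨f, hf, rfl⟩ := hx1
      have hx2' : F (Ideal.Quotient.mk I f) = 0 := hx2
      rw [hFmk, Ideal.Quotient.eq_zero_iff_mem] at hx2'
      clear hx2
      rename' hx2' => hx2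
      -- f ∈ I ⊔ span {p}
      obtain ⟨i, hi, s, hs, rfl⟩ := Submodule.mem_sup.mp hx2
      obtain ⟨g, rfl⟩ := Ideal.mem_span_singleton'.mp hs
      have hfI : (i + g * p) - p * g ∈ I := by
        rw [mul_comm g p]; simpa using hi
      have hcomp := hI q hfI
      rw [decompose_apply, map_sub, MvPolynomial.homogeneousComponent_of_mem hf,
        if_pos rfl, hc_mul hp] at hcomp
      by_cases hlq : l ≤ q
      · rw [if_pos hlq] at hcomp ⊢
        refine ⟨Ideal.Quotient.mk I (MvPolynomial.homogeneousComponent (q - l) g),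
          ⟨_, MvPolynomial.homogeneousComponent_isHomogeneous _ _, rfl⟩, ?_⟩
        rw [hmulp_apply]
        show Ideal.Quotient.mk I _ = Ideal.Quotient.mk I (i + g * p)
        rw [Ideal.Quotient.mk_eq_mk_iff_sub_mem]
        exact neg_sub (i + g * p) _ ▸ I.neg_mem hcomp
      · rw [if_neg hlq, sub_zero] at hcomp
        rw [if_neg hlq, Submodule.mem_bot]
        show Ideal.Quotient.mk I (i + g * p) = 0
        rw [Ideal.Quotient.eq_zero_iff_mem]
        exact hcomp
    · split_ifs with hlq
      · rintro x ⟨y, ⟨g, hg, rfl⟩, rfl⟩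
        simp only [AlgHom.toLinearMap_apply, Ideal.Quotient.mkₐ_eq_mk]
        rw [hmulp_apply]
        constructor
        · refine ⟨p * g, ?_, rfl⟩
          have := hp.mul (MvPolynomial.mem_homogeneousSubmodule _ _ |>.mp hg)
          rwa [Nat.add_sub_cancel' hlq] at this
        · show F (Ideal.Quotient.mk I (p * g)) = 0
          rw [hFmk, Ideal.Quotient.eq_zero_iff_mem]
          exact Ideal.mul_mem_right g _ (Submodule.mem_sup_right (Ideal.subset_span rfl))
      · exact bot_le
  -- dimension count by rank-nullity
  have hrn := LinearMap.finrank_range_add_finrank_ker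
    (F.toLinearMap.domRestrict (hsImage I q))
  rw [LinearMap.range_domRestrict, LinearMap.ker_domRestrict] at hrn
  have hker : finrank k ↥(Submodule.comap (hsImage I q).subtype (LinearMap.ker F.toLinearMap))
      = finrank k ↥(hsImage I q ⊓ LinearMap.ker F.toLinearMap) := by
    rw [(Submodule.equivMapOfInjective _ (Submodule.injective_subtype _) _).finrank_eq,
      Submodule.map_comap_subtype]
  rw [hker, key2, ← key1] at hrn
  by_cases hlq : l ≤ q
  · rw [if_pos hlq] at hrn ⊢
    rw [← (Submodule.equivMapOfInjective mulp hmulp_inj _).finrank_eq] at hrn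
    exact hrn
  · rw [if_neg hlq] at hrn ⊢
    simpa using hrn
end

section
variable {k : Type*} [Field k] {n : ℕ}

lemma base (q : ℕ) :
    finrank k ↥(hsImage (⊥ : Ideal (MvPolynomial (Fin n) k)) q)
      = (Finset.finsuppAntidiag (Finset.univ : Finset (Fin n)) q).card := by
  have hinj : Function.Injective
      (Ideal.Quotient.mkₐ k (⊥ : Ideal (MvPolynomial (Fin n) k))).toLinearMap := by
    intro x y h
    have h' : Ideal.Quotient.mk (⊥ : Ideal (MvPolynomial (Fin n) k)) x
        = Ideal.Quotient.mk ⊥ y := h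
    rw [Ideal.Quotient.mk_eq_mk_iff_sub_mem] at h'
    simpa [sub_eq_zero] using h'
  rw [hsImage, ← (Submodule.equivMapOfInjective _ hinj _).finrank_eq, finrank_H]

lemma coeff_pow_mk_one (q : ℕ) :
    PowerSeries.coeff (R := ℤ) q ((PowerSeries.mk fun _ => (1 : ℤ)) ^ n)
      = (Finset.finsuppAntidiag (Finset.univ : Finset (Fin n)) q).card := by
  have h : (PowerSeries.mk fun _ => (1 : ℤ)) ^ n
      = ∏ _i : Fin n, (PowerSeries.mk fun _ => (1 : ℤ)) := by
    rw [Finset.prod_const, Finset.card_univ, Fintype.card_fin]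
  rw [h, PowerSeries.coeff_prod]
  simp [PowerSeries.coeff_mk]

lemma smul_top_ideal (J : Ideal (MvPolynomial (Fin n) k)) :
    (J • ⊤ : Submodule (MvPolynomial (Fin n) k) (MvPolynomial (Fin n) k)) = J := by
  conv_lhs => rw [← J.span_eq]
  rw [Submodule.span_smul_eq, Submodule.set_smul_top_eq_span, J.span_eq]

lemma main_aux : ∀ (r : ℕ) (l : Fin r → ℕ) (P : Fin r → MvPolynomial (Fin n) k)
    (_hP : ∀ i, (P i).IsHomogeneous (l i))
    (_hreg : RingTheory.Sequence.IsRegular (MvPolynomial (Fin n) k) (List.ofFn P)) (q : ℕ),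
    (finrank k ↥(hsImage (Ideal.span (Set.range P)) q) : ℤ) =
      PowerSeries.coeff (R := ℤ) q ((∏ i : Fin r, (1 - PowerSeries.X ^ l i)) *
        (PowerSeries.mk fun _ => (1 : ℤ)) ^ n) := by
  intro r
  induction r with
  | zero =>
    intro l P hP hreg q
    rw [Set.range_eq_empty P, Ideal.span_empty]
    simp only [Finset.univ_eq_empty, Finset.prod_empty, one_mul]
    rw [base, coeff_pow_mk_one]
  | succ r ih =>
    intro l P hP hreg q
    set p := P (Fin.last r) with hp_def
    set m := l (Fin.last r) with hm_def
    set P' : Fin r → MvPolynomial (Fin n) k := fun i => P i.castSucc with hP'_def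
    set l' : Fin r → ℕ := fun i => l i.castSucc with hl'_def
    have hofn : List.ofFn P = List.ofFn P' ++ [p] := by
      rw [List.ofFn_succ', List.concat_eq_append]
    have hIofList : Ideal.ofList (List.ofFn P') = Ideal.span (Set.range P') :=
      congrArg Ideal.span (Set.ext fun x => List.mem_ofFn)
    have hIofListFull : Ideal.ofList (List.ofFn P) = Ideal.span (Set.range P) :=
      congrArg Ideal.span (Set.ext fun x => List.mem_ofFn)
    set I₁ : Ideal (MvPolynomial (Fin n) k) := Ideal.span (Set.range P') with hI₁
    -- extract regularity data
    obtain ⟨hw, hne⟩ := (RingTheory.Sequence.isRegular_iff _ _).mp hreg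
    rw [hofn, RingTheory.Sequence.isWeaklyRegular_append_iff] at hw
    obtain ⟨hw1, hw2⟩ := hw
    rw [smul_top_ideal, hIofList] at hw2
    have hsreg : IsSMulRegular (MvPolynomial (Fin n) k ⧸ I₁) p :=
      (RingTheory.Sequence.isWeaklyRegular_singleton_iff _ _).mp hw2
    have hne' : (⊤ : Submodule (MvPolynomial (Fin n) k) (MvPolynomial (Fin n) k)) ≠ Ideal.ofList (List.ofFn P') • (⊤ : Submodule (MvPolynomial (Fin n) k) (MvPolynomial (Fin n) k)) := by
      rw [smul_top_ideal, hIofList]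
      rw [smul_top_ideal, hIofListFull] at hne
      intro htop
      apply hne
      refine le_antisymm (le_trans htop.le ?_) le_top
      exact Ideal.span_mono (Set.range_comp_subset_range Fin.castSucc P)
    have hreg' : RingTheory.Sequence.IsRegular (MvPolynomial (Fin n) k) (List.ofFn P') :=
      (RingTheory.Sequence.isRegular_iff _ _).mpr ⟨hw1, hne'⟩
    -- the ideal splits
    have hspan : Ideal.span (Set.range P) = I₁ ⊔ Ideal.span {p} := by
      rw [← hIofListFull, hofn, Ideal.ofList_append, hIofList, Ideal.ofList_singleton]
    -- homogeneity of I₁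
    have hI₁hom : I₁.IsHomogeneous (MvPolynomial.homogeneousSubmodule (Fin n) k) := by
      apply Ideal.homogeneous_span
      rintro x ⟨i, rfl⟩
      exact ⟨l' i, hP i.castSucc⟩
    -- apply the step lemma
    have hstep := step I₁ hI₁hom (hP (Fin.last r)) hsreg q
    rw [← hspan] at hstep
    have hstep : finrank k ↥(hsImage (Ideal.span (Set.range P)) q)
        + (if m ≤ q then finrank k ↥(hsImage I₁ (q - m)) else 0)
        = finrank k ↥(hsImage I₁ q) := hstep
    -- power series bookkeeping
    set G : PowerSeries ℤ := (∏ i : Fin r, (1 - PowerSeries.X ^ l' i)) *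
      (PowerSeries.mk fun _ => (1 : ℤ)) ^ n with hG
    have hprod : (∏ i : Fin (r + 1), (1 - PowerSeries.X ^ l i)) *
        (PowerSeries.mk fun _ => (1 : ℤ)) ^ n = G - G * PowerSeries.X ^ m := by
      rw [Fin.prod_univ_castSucc, hG]
      ring
    rw [hprod, map_sub, PowerSeries.coeff_mul_X_pow', ← ih l' P' (fun i => hP i.castSucc) hreg' q]
    have hih2 : m ≤ q → (finrank k ↥(hsImage I₁ (q - m)) : ℤ)
        = PowerSeries.coeff (R := ℤ) (q - m) G := fun _ =>
      ih l' P' (fun i => hP i.castSucc) hreg' (q - m)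
    rw [← hI₁]
    by_cases hmq : m ≤ q
    · rw [if_pos hmq] at hstep ⊢
      rw [← hih2 hmq]
      omega
    · rw [if_neg hmq] at hstep ⊢
      omega
end

end MacaulayAux

/-- (Macaulay's Hilbert series theorem for ideals of the principal class) If
`P₁, …, P_r` are homogeneous polynomials of degrees `l₁, …, l_r ≥ 1` in `k[X₁,…,X_n]`
forming a regular sequence, and `I = (P₁,…,P_r)`, then for every `q` the `k`-dimension
of the image of the degree-`q` homogeneous component under the quotient map
`k[X₁,…,X_n] → k[X₁,…,X_n]/I` equals the coefficient of `x^q` in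
`(1 - x^{l₁}) ⋯ (1 - x^{l_r}) · (∑_{j≥0} x^j)^n`. -/
theorem hilbert_series_of_regular_sequence
    {k : Type*} [Field k] (n : ℕ) (hn : 1 ≤ n) (r : ℕ)
    (l : Fin r → ℕ) (hl : ∀ i, 1 ≤ l i)
    (P : Fin r → MvPolynomial (Fin n) k)
    (hP : ∀ i, (P i).IsHomogeneous (l i))
    (hreg : RingTheory.Sequence.IsRegular (MvPolynomial (Fin n) k) (List.ofFn P)) :
    ∀ q : ℕ,
      (Module.finrank k
        ↥(Submodule.map (Ideal.Quotient.mkₐ k (Ideal.span (Set.range P))).toLinearMap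
          (MvPolynomial.homogeneousSubmodule (Fin n) k q)) : ℤ) =
      PowerSeries.coeff (R := ℤ) q
        ((∏ i : Fin r, (1 - PowerSeries.X ^ l i)) *
          (PowerSeries.mk fun _ => (1 : ℤ)) ^ n) := by
  intro q
  exact MacaulayAux.main_aux r l P hP hreg q
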